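/- For all (a₁,a₂) ∈ ℝ², |S_ρ(a₁,a₂)|² = K(X₁(a₁,a₂), X₂(a₁,a₂)), where |·| denotes the complex absolute value. -/

import Mathlib

open Real

noncomputable section

/-- `X₁` for `A₂`. -/
def X1 (a₁ a₂ : ℝ) : ℝ :=
  Real.cos (2 * π * a₁) + Real.cos (2 * π * a₂) + Real.cos (2 * π * (a₁ - a₂))

/-- `X₂` for `A₂`. -/
def X2 (a₁ a₂ : ℝ) : ℝ :=
  Real.sin (2 * π * a₁) - Real.sin (2 * π * a₂) - Real.sin (2 * π * (a₁ - a₂))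

/-- The weight polynomial `K` of `A₂`. -/
def K (y₁ y₂ : ℝ) : ℝ :=
  -(y₁ ^ 2 + y₂ ^ 2 + 9) ^ 2 + 8 * (y₁ ^ 3 - 3 * y₁ * y₂ ^ 2) + 108

/-- The lowest antisymmetric orbit function `S_ρ` of `A₂`. -/
def Srho (a₁ a₂ : ℝ) : ℂ :=
  Complex.exp (2 * π * Complex.I * (a₁ + a₂)) -
  Complex.exp (2 * π * Complex.I * (-a₁ + 2 * a₂)) -
  Complex.exp (2 * π * Complex.I * (2 * a₁ - a₂)) +
  Complex.exp (2 * π * Complex.I * (a₁ - 2 * a₂)) +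
  Complex.exp (2 * π * Complex.I * (-2 * a₁ + a₂)) -
  Complex.exp (2 * π * Complex.I * (-a₁ - a₂))

/-- For `A₂`, `|S_ρ|² = K(X₁, X₂)` pointwise. -/
theorem abs_Srho_sq_eq_K_A2 (a₁ a₂ : ℝ) :
    ‖Srho a₁ a₂‖ ^ 2 = K (X1 a₁ a₂) (X2 a₁ a₂) := by
  have h : ∀ r : ℝ, Complex.exp ((r : ℂ) * Complex.I) =
      (Real.cos r : ℂ) + (Real.sin r : ℂ) * Complex.I := fun r => by
    rw [Complex.exp_mul_I, Complex.ofReal_cos, Complex.ofReal_sin]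
  have key : Srho a₁ a₂ =
      ((Real.cos (2*π*a₁+2*π*a₂) - Real.cos (2*π*a₂+2*π*a₂-2*π*a₁)
        - Real.cos (2*π*a₁+2*π*a₁-2*π*a₂) + Real.cos (2*π*a₁-(2*π*a₂+2*π*a₂))
        + Real.cos (2*π*a₂-(2*π*a₁+2*π*a₁)) - Real.cos (-(2*π*a₁+2*π*a₂)) : ℝ) : ℂ) +
      ((Real.sin (2*π*a₁+2*π*a₂) - Real.sin (2*π*a₂+2*π*a₂-2*π*a₁)
        - Real.sin (2*π*a₁+2*π*a₁-2*π*a₂) + Real.sin (2*π*a₁-(2*π*a₂+2*π*a₂))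
        + Real.sin (2*π*a₂-(2*π*a₁+2*π*a₁)) - Real.sin (-(2*π*a₁+2*π*a₂)) : ℝ) : ℂ) * Complex.I := by
    unfold Srho
    rw [show 2*π*Complex.I*((a₁:ℂ)+(a₂:ℂ)) = ((2*π*a₁+2*π*a₂ : ℝ):ℂ)*Complex.I from by push_cast; ring,
        show 2*π*Complex.I*(-(a₁:ℂ)+2*(a₂:ℂ)) = ((2*π*a₂+2*π*a₂-2*π*a₁ : ℝ):ℂ)*Complex.I from by push_cast; ring,
        show 2*π*Complex.I*(2*(a₁:ℂ)-(a₂:ℂ)) = ((2*π*a₁+2*π*a₁-2*π*a₂ : ℝ):ℂ)*Complex.I from by push_cast; ring,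
        show 2*π*Complex.I*((a₁:ℂ)-2*(a₂:ℂ)) = ((2*π*a₁-(2*π*a₂+2*π*a₂) : ℝ):ℂ)*Complex.I from by push_cast; ring,
        show 2*π*Complex.I*(-2*(a₁:ℂ)+(a₂:ℂ)) = ((2*π*a₂-(2*π*a₁+2*π*a₁) : ℝ):ℂ)*Complex.I from by push_cast; ring,
        show 2*π*Complex.I*(-(a₁:ℂ)-(a₂:ℂ)) = ((-(2*π*a₁+2*π*a₂) : ℝ):ℂ)*Complex.I from by push_cast; ring,
        h, h, h, h, h, h]
    push_cast
    ring
  rw [key, Complex.sq_norm, Complex.normSq_add_mul_I]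
  simp only [K, X1, X2, show 2*π*(a₁-a₂) = 2*π*a₁ - 2*π*a₂ from by ring,
    Real.cos_add, Real.cos_sub, Real.sin_add, Real.sin_sub, Real.cos_neg, Real.sin_neg]
  linear_combination ((19) + (-18)*Real.sin (2*π*a₂)^2 + (7)*Real.sin (2*π*a₂)^4 + (-16)*Real.cos (2*π*a₂) + (-8)*Real.cos (2*π*a₂)*Real.sin (2*π*a₂)^2 + (-18)*Real.cos (2*π*a₂)^2 + (14)*Real.cos (2*π*a₂)^2*Real.sin (2*π*a₂)^2 + (24)*Real.cos (2*π*a₂)^3 + (7)*Real.cos (2*π*a₂)^4 + (20)*Real.sin (2*π*a₁)*Real.sin (2*π*a₂) + (-4)*Real.sin (2*π*a₁)*Real.sin (2*π*a₂)^3 + (-40)*Real.sin (2*π*a₁)*Real.cos (2*π*a₂)*Real.sin (2*π*a₂) + (8)*Real.sin (2*π*a₁)*Real.cos (2*π*a₂)*Real.sin (2*π*a₂)^3 + (-4)*Real.sin (2*π*a₁)*Real.cos (2*π*a₂)^2*Real.sin (2*π*a₂) + (8)*Real.sin (2*π*a₁)*Real.cos (2*π*a₂)^3*Real.sin (2*π*a₂)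 + (1)*Real.sin (2*π*a₁)^2 + (6)*Real.sin (2*π*a₁)^2*Real.sin (2*π*a₂)^2 + (1)*Real.sin (2*π*a₁)^2*Real.sin (2*π*a₂)^4 + (-4)*Real.sin (2*π*a₁)^2*Real.cos (2*π*a₂) + (-4)*Real.sin (2*π*a₁)^2*Real.cos (2*π*a₂)*Real.sin (2*π*a₂)^2 + (6)*Real.sin (2*π*a₁)^2*Real.cos (2*π*a₂)^2 + (2)*Real.sin (2*π*a₁)^2*Real.cos (2*π*a₂)^2*Real.sin (2*π*a₂)^2 + (-4)*Real.sin (2*π*a₁)^2*Real.cos (2*π*a₂)^3 + (1)*Real.sin (2*π*a₁)^2*Real.cos (2*π*a₂)^4 + (24)*Real.cos (2*π*a₁) + (-4)*Real.cos (2*π*a₁)*Real.sin (2*π*a₂)^2 + (-4)*Real.cos (2*π*a₁)*Real.sin (2*π*a₂)^4 + (-20)*Real.cos (2*π*a₁)*Real.cos (2*π*a₂) + (4)*Real.cos (2*π*a₁)*Real.cos (2*π*a₂)*Real.sin (2*π*a₂)^2 + (-44)*Real.cos (2*π*a₁)*Real.cos (2*π*a₂)^2 + (4)*Real.cos (2*π*a₁)*Real.cos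 (2*π*a₂)^3 + (4)*Real.cos (2*π*a₁)*Real.cos (2*π*a₂)^4 + (8)*Real.cos (2*π*a₁)*Real.sin (2*π*a₁)*Real.sin (2*π*a₂) + (8)*Real.cos (2*π*a₁)*Real.sin (2*π*a₁)*Real.sin (2*π*a₂)^3 + (8)*Real.cos (2*π*a₁)*Real.sin (2*π*a₁)*Real.cos (2*π*a₂)^2*Real.sin (2*π*a₂) + (1)*Real.cos (2*π*a₁)^2 + (6)*Real.cos (2*π*a₁)^2*Real.sin (2*π*a₂)^2 + (1)*Real.cos (2*π*a₁)^2*Real.sin (2*π*a₂)^4 + (4)*Real.cos (2*π*a₁)^2*Real.cos (2*π*a₂) + (4)*Real.cos (2*π*a₁)^2*Real.cos (2*π*a₂)*Real.sin (2*π*a₂)^2 + (6)*Real.cos (2*π*a₁)^2*Real.cos (2*π*a₂)^2 + (2)*Real.cos (2*π*a₁)^2*Real.cos (2*π*a₂)^2*Real.sin (2*π*a₂)^2 + (4)*Real.cos (2*π*a₁)^2*Real.cos (2*π*a₂)^3 + (1)*Real.cos (2*π*a₁)^2*Real.cos (2*π*a₂)^4) * Real.sin_sq_add_cos_sq (2*π*a₁)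 + ((8) + (8)*Real.sin (2*π*a₂)^2 + (16)*Real.cos (2*π*a₂) + (8)*Real.cos (2*π*a₂)^2 + (16)*Real.sin (2*π*a₁)*Real.sin (2*π*a₂) + (16)*Real.sin (2*π*a₁)*Real.cos (2*π*a₂)*Real.sin (2*π*a₂) + (-24)*Real.cos (2*π*a₁) + (-8)*Real.cos (2*π*a₁)*Real.sin (2*π*a₂)^2 + (-16)*Real.cos (2*π*a₁)*Real.cos (2*π*a₂) + (8)*Real.cos (2*π*a₁)*Real.cos (2*π*a₂)^2 + (-32)*Real.cos (2*π*a₁)*Real.sin (2*π*a₁)*Real.sin (2*π*a₂) + (-32)*Real.cos (2*π*a₁)^2*Real.cos (2*π*a₂) + (32)*Real.cos (2*π*a₁)^3) * Real.sin_sq_add_cos_sq (2*π*a₂)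

end
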